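/- Let λ, β₁, β₂, γ₁, γ₂ ∈ ℝ and for j = 1,2 define Hⱼ(k) = k·e^{iβⱼ} + λ/(k·e^{iβⱼ}) − γⱼ and Pⱼ(k) = Hⱼ(k)/Hⱼ*(k), where Hⱼ*(k) = k·e^{−iβⱼ} + λ/(k·e^{−iβⱼ}) − γⱼ. Suppose sin 3(β₁−β₂) = 0 and γ₂(3λ−γ₂²)·sin 3β₁ − γ₁(3λ−γ₁²)·sin 3β₂ = 0. Then for all k ∈ ℂ \ {0} such that both sides are defined: P₁(k)·P₁(αk)·P₁(ᾱk) = P₂(k)·P₂(αk)·P₂(ᾱk), where α = e^{2πi/3}. -/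

import Mathlib

open Complex

private lemma cube_prod4 (z L γ α : ℂ) (hz : z ≠ 0) (hα0 : α ≠ 0)
    (hα1 : α^2 + α + 1 = 0) :
    (z + L/z - γ) * (α*z + L/(α*z) - γ) * (α^2*z + L/(α^2*z) - γ)
    = z^3 + L^3/z^3 - (γ^3 - 3*L*γ) := by
  field_simp
  linear_combination (z^6*α^4 + z^4*L*α^4 - z^5*γ*α^4 - z^3*L*γ*α^3 + z^4*γ^2*α^3
    - z^6*α^3 - z^4*L*α^3 - z^3*L*γ*α^2 + z^2*L^2*α^2 + z^4*L*α^2 + z^2*L*γ^2*α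
    - L^3*α - z^3*L*γ*α - z^2*L^2*α - z*L^2*γ + L^3 + z^2*L^2) * hα1

private lemma key4 (a b w L c₁ c₂ : ℂ) (ha : a ≠ 0) (hb : b ≠ 0) (hw : w ≠ 0)
    (h1 : a^2 = b^2) (h2 : c₂*(a^2-1)*b = c₁*(b^2-1)*a) :
    (w*a + L/(w*a) - c₁) * (w*b⁻¹ + L/(w*b⁻¹) - c₂)
    = (w*b + L/(w*b) - c₂) * (w*a⁻¹ + L/(w*a⁻¹) - c₁) := by
  have e1 : (w*b⁻¹ + L/(w*b⁻¹) - c₂) = (w/b + L*b/w - c₂) := by field_simp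
  have e2 : (w*a⁻¹ + L/(w*a⁻¹) - c₁) = (w/a + L*a/w - c₁) := by field_simp
  rw [e1, e2]
  field_simp
  linear_combination (w^4 - L^2) * h1 + (w*L - w^3) * h2

theorem stmt_4 (lam β₁ β₂ γ₁ γ₂ : ℝ)
    (α : ℂ) (hα : α = Complex.exp (2 * Real.pi * Complex.I / 3))
    (H₁ H₂ H₁s H₂s P₁ P₂ : ℂ → ℂ)
    (hH₁ : ∀ k : ℂ, k ≠ 0 → H₁ k = k * Complex.exp (Complex.I * β₁)
        + (lam : ℂ) / (k * Complex.exp (Complex.I * β₁)) - γ₁)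
    (hH₂ : ∀ k : ℂ, k ≠ 0 → H₂ k = k * Complex.exp (Complex.I * β₂)
        + (lam : ℂ) / (k * Complex.exp (Complex.I * β₂)) - γ₂)
    (hH₁s : ∀ k : ℂ, k ≠ 0 → H₁s k = k * Complex.exp (-(Complex.I * β₁))
        + (lam : ℂ) / (k * Complex.exp (-(Complex.I * β₁))) - γ₁)
    (hH₂s : ∀ k : ℂ, k ≠ 0 → H₂s k = k * Complex.exp (-(Complex.I * β₂))
        + (lam : ℂ) / (k * Complex.exp (-(Complex.I * β₂))) - γ₂)
    (hP₁ : ∀ k : ℂ, k ≠ 0 → P₁ k = H₁ k / H₁s k)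
    (hP₂ : ∀ k : ℂ, k ≠ 0 → P₂ k = H₂ k / H₂s k)
    (hsin : Real.sin (3 * (β₁ - β₂)) = 0)
    (hγ : γ₂ * (3 * lam - γ₂ ^ 2) * Real.sin (3 * β₁)
        - γ₁ * (3 * lam - γ₁ ^ 2) * Real.sin (3 * β₂) = 0) :
    ∀ k : ℂ, k ≠ 0 →
      H₁s k ≠ 0 → H₁s (α * k) ≠ 0 → H₁s ((starRingEnd ℂ) α * k) ≠ 0 →
      H₂s k ≠ 0 → H₂s (α * k) ≠ 0 → H₂s ((starRingEnd ℂ) α * k) ≠ 0 →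
      P₁ k * P₁ (α * k) * P₁ ((starRingEnd ℂ) α * k)
        = P₂ k * P₂ (α * k) * P₂ ((starRingEnd ℂ) α * k) := by
  -- basic facts about α
  have hα0 : α ≠ 0 := by rw [hα]; exact Complex.exp_ne_zero _
  have hα3 : α ^ 3 = 1 := by
    rw [hα, ← Complex.exp_nat_mul]
    rw [show (3 : ℕ) * (2 * ↑Real.pi * Complex.I / 3) = 2 * ↑Real.pi * Complex.I by
      push_cast; ring]
    exact Complex.exp_two_pi_mul_I
  have hαform : α = ((Real.cos (2*Real.pi/3) : ℝ) : ℂ) + ((Real.sin (2*Real.pi/3) : ℝ) : ℂ) * Complex.I := by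
    rw [hα, show (2 * (Real.pi:ℂ) * Complex.I / 3) = ((2*Real.pi/3 : ℝ) : ℂ) * Complex.I by
      push_cast; ring, Complex.exp_mul_I, ← Complex.ofReal_cos, ← Complex.ofReal_sin]
  have hαne1 : α ≠ 1 := by
    intro h
    have him : α.im = Real.sin (2*Real.pi/3) := by
      rw [hαform]
      simp only [Complex.add_im, Complex.ofReal_im, Complex.mul_im, Complex.ofReal_re,
        Complex.I_im, Complex.I_re]
      ring
    have hpos : 0 < Real.sin (2*Real.pi/3) := by
      apply Real.sin_pos_of_pos_of_lt_pi
      · positivity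
      · nlinarith [Real.pi_pos]
    rw [h] at him
    simp at him
    linarith
  have hα1 : α^2 + α + 1 = 0 := by
    have h0 : (α - 1) * (α^2 + α + 1) = 0 := by linear_combination hα3
    rcases mul_eq_zero.1 h0 with h | h
    · exact absurd (sub_eq_zero.1 h) hαne1
    · exact h
  have hconj : (starRingEnd ℂ) α = α ^ 2 := by
    have h1 : (starRingEnd ℂ) α = Complex.exp (-(2 * ↑Real.pi * Complex.I / 3)) := by
      rw [hα, ← Complex.exp_conj]
      congr 1
      simp [map_div₀, Complex.conj_I, Complex.conj_ofReal, map_ofNat]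
      ring
    rw [h1, Complex.exp_neg, ← hα]
    exact inv_eq_of_mul_eq_one_right (by linear_combination hα3)
  -- exponentials
  set E : ℂ := Complex.exp (Complex.I * β₁) with hEdef
  set F : ℂ := Complex.exp (Complex.I * β₂) with hFdef
  have hE0 : E ≠ 0 := Complex.exp_ne_zero _
  have hF0 : F ≠ 0 := Complex.exp_ne_zero _
  -- h1 : (E^3)^2 = (F^3)^2 from hsin
  have hu : Complex.exp (((3*(β₁-β₂) : ℝ) : ℂ) * Complex.I)
      = Complex.exp (-((3*(β₁-β₂) : ℝ) : ℂ) * Complex.I) := by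
    rw [Complex.exp_mul_I, Complex.exp_mul_I, Complex.cos_neg, Complex.sin_neg,
      ← Complex.ofReal_sin, hsin]
    simp
  have hu1 : Complex.exp (((3*(β₁-β₂) : ℝ) : ℂ) * Complex.I)
      * Complex.exp (((3*(β₁-β₂) : ℝ) : ℂ) * Complex.I) = 1 := by
    nth_rewrite 2 [hu]
    rw [← Complex.exp_add]
    simp
  have h1 : (E^3)^2 = (F^3)^2 := by
    have : (E^3)^2 = (F^3)^2 * (Complex.exp (((3*(β₁-β₂) : ℝ) : ℂ) * Complex.I)
        * Complex.exp (((3*(β₁-β₂) : ℝ) : ℂ) * Complex.I)) := by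
      rw [hEdef, hFdef]
      rw [← Complex.exp_nat_mul, ← Complex.exp_nat_mul, ← Complex.exp_nat_mul,
        ← Complex.exp_nat_mul, ← Complex.exp_add, ← Complex.exp_add]
      congr 1
      push_cast; ring
    rw [this, hu1, mul_one]
  -- sin formulas
  have hsinE : E^3 * E^3 - 1 = 2 * ((Real.sin (3*β₁) : ℝ) : ℂ) * Complex.I * E^3 := by
    have ha3 : E^3 = Complex.exp (((3*β₁ : ℝ) : ℂ) * Complex.I) := by
      rw [hEdef, ← Complex.exp_nat_mul]; congr 1; push_cast; ring
    have hinv : E^3 * Complex.exp (-((3*β₁ : ℝ) : ℂ) * Complex.I) = 1 := by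
      rw [ha3, ← Complex.exp_add]; simp
    have hd : Complex.exp (((3*β₁ : ℝ) : ℂ) * Complex.I)
        - Complex.exp (-((3*β₁ : ℝ) : ℂ) * Complex.I)
        = 2 * ((Real.sin (3*β₁) : ℝ) : ℂ) * Complex.I := by
      rw [Complex.exp_mul_I, Complex.exp_mul_I, Complex.cos_neg, Complex.sin_neg,
        ← Complex.ofReal_sin]
      ring
    calc E^3 * E^3 - 1 = E^3 * (Complex.exp (((3*β₁ : ℝ) : ℂ) * Complex.I)
          - Complex.exp (-((3*β₁ : ℝ) : ℂ) * Complex.I))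
          + (E^3 * Complex.exp (-((3*β₁ : ℝ) : ℂ) * Complex.I) - 1) := by
            rw [← ha3]; ring
      _ = 2 * ((Real.sin (3*β₁) : ℝ) : ℂ) * Complex.I * E^3 := by
            rw [hd, hinv]; ring
  have hsinF : F^3 * F^3 - 1 = 2 * ((Real.sin (3*β₂) : ℝ) : ℂ) * Complex.I * F^3 := by
    have ha3 : F^3 = Complex.exp (((3*β₂ : ℝ) : ℂ) * Complex.I) := by
      rw [hFdef, ← Complex.exp_nat_mul]; congr 1; push_cast; ring
    have hinv : F^3 * Complex.exp (-((3*β₂ : ℝ) : ℂ) * Complex.I) = 1 := by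
      rw [ha3, ← Complex.exp_add]; simp
    have hd : Complex.exp (((3*β₂ : ℝ) : ℂ) * Complex.I)
        - Complex.exp (-((3*β₂ : ℝ) : ℂ) * Complex.I)
        = 2 * ((Real.sin (3*β₂) : ℝ) : ℂ) * Complex.I := by
      rw [Complex.exp_mul_I, Complex.exp_mul_I, Complex.cos_neg, Complex.sin_neg,
        ← Complex.ofReal_sin]
      ring
    calc F^3 * F^3 - 1 = F^3 * (Complex.exp (((3*β₂ : ℝ) : ℂ) * Complex.I)
          - Complex.exp (-((3*β₂ : ℝ) : ℂ) * Complex.I))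
          + (F^3 * Complex.exp (-((3*β₂ : ℝ) : ℂ) * Complex.I) - 1) := by
            rw [← ha3]; ring
      _ = 2 * ((Real.sin (3*β₂) : ℝ) : ℂ) * Complex.I * F^3 := by
            rw [hd, hinv]; ring
  -- hγ, complexified
  have hγC : ((γ₂:ℂ) * (3 * (lam:ℂ) - (γ₂:ℂ) ^ 2) * ((Real.sin (3 * β₁) : ℝ) : ℂ)
      - (γ₁:ℂ) * (3 * (lam:ℂ) - (γ₁:ℂ) ^ 2) * ((Real.sin (3 * β₂) : ℝ) : ℂ)) = 0 := by
    exact_mod_cast congrArg (fun x : ℝ => (x : ℂ)) hγ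
  set C₁ : ℂ := (γ₁:ℂ)^3 - 3*(lam:ℂ)*(γ₁:ℂ) with hC₁
  set C₂ : ℂ := (γ₂:ℂ)^3 - 3*(lam:ℂ)*(γ₂:ℂ) with hC₂
  have h2 : C₂*((E^3)^2-1)*(F^3) = C₁*((F^3)^2-1)*(E^3) := by
    rw [hC₁, hC₂]
    linear_combination ((γ₂:ℂ)^3 - 3*(lam:ℂ)*(γ₂:ℂ)) * F^3 * hsinE
      - ((γ₁:ℂ)^3 - 3*(lam:ℂ)*(γ₁:ℂ)) * E^3 * hsinF
      - 2 * Complex.I * E^3 * F^3 * hγC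
  -- main part
  intro k hk n1 n2 n3 n4 n5 n6
  rw [hconj] at n3 n6 ⊢
  have hk1 : α * k ≠ 0 := mul_ne_zero hα0 hk
  have hk2 : α ^ 2 * k ≠ 0 := mul_ne_zero (pow_ne_zero 2 hα0) hk
  have hprod : ∀ (G : ℂ → ℂ) (e : ℂ) (γ : ℝ), e ≠ 0 →
      (∀ m : ℂ, m ≠ 0 → G m = m * e + (lam:ℂ)/(m*e) - (γ:ℂ)) →
      G k * G (α*k) * G (α^2*k)
        = k^3*e^3 + (lam:ℂ)^3/(k^3*e^3) - ((γ:ℂ)^3 - 3*(lam:ℂ)*(γ:ℂ)) := by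
    intro G e γ he hG
    rw [hG k hk, hG (α*k) hk1, hG (α^2*k) hk2]
    have h := cube_prod4 (k*e) (lam:ℂ) (γ:ℂ) α (mul_ne_zero hk he) hα0 hα1
    linear_combination h
  have hH₁s' : ∀ m : ℂ, m ≠ 0 → H₁s m = m * E⁻¹ + (lam:ℂ)/(m*E⁻¹) - (γ₁:ℂ) := by
    intro m hm; rw [hH₁s m hm, hEdef, Complex.exp_neg]
  have hH₂s' : ∀ m : ℂ, m ≠ 0 → H₂s m = m * F⁻¹ + (lam:ℂ)/(m*F⁻¹) - (γ₂:ℂ) := by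
    intro m hm; rw [hH₂s m hm, hFdef, Complex.exp_neg]
  have PA := hprod H₁ E γ₁ hE0 (fun m hm => hH₁ m hm)
  have PB := hprod H₁s E⁻¹ γ₁ (inv_ne_zero hE0) hH₁s'
  have PC := hprod H₂ F γ₂ hF0 (fun m hm => hH₂ m hm)
  have PD := hprod H₂s F⁻¹ γ₂ (inv_ne_zero hF0) hH₂s'
  rw [hP₁ k hk, hP₁ (α*k) hk1, hP₁ (α^2*k) hk2,
      hP₂ k hk, hP₂ (α*k) hk1, hP₂ (α^2*k) hk2]
  rw [div_mul_div_comm, div_mul_div_comm, div_mul_div_comm, div_mul_div_comm]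
  have hD1 : H₁s k * H₁s (α*k) * H₁s (α^2*k) ≠ 0 := mul_ne_zero (mul_ne_zero n1 n2) n3
  have hD2 : H₂s k * H₂s (α*k) * H₂s (α^2*k) ≠ 0 := mul_ne_zero (mul_ne_zero n4 n5) n6
  rw [div_eq_div_iff hD1 hD2]
  rw [PA, PB, PC, PD]
  have := key4 (E^3) (F^3) (k^3) ((lam:ℂ)^3) C₁ C₂ (pow_ne_zero 3 hE0)
    (pow_ne_zero 3 hF0) (pow_ne_zero 3 hk) h1 h2
  calc (k^3*E^3 + (lam:ℂ)^3/(k^3*E^3) - ((γ₁:ℂ)^3 - 3*(lam:ℂ)*(γ₁:ℂ)))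
      * (k^3*F⁻¹^3 + (lam:ℂ)^3/(k^3*F⁻¹^3) - ((γ₂:ℂ)^3 - 3*(lam:ℂ)*(γ₂:ℂ)))
      = (k^3*E^3 + (lam:ℂ)^3/(k^3*E^3) - C₁) * (k^3*(F^3)⁻¹ + (lam:ℂ)^3/(k^3*(F^3)⁻¹) - C₂) := by
        rw [hC₁, hC₂, inv_pow]
    _ = (k^3*F^3 + (lam:ℂ)^3/(k^3*F^3) - C₂) * (k^3*(E^3)⁻¹ + (lam:ℂ)^3/(k^3*(E^3)⁻¹) - C₁) := this
    _ = (k^3*F^3 + (lam:ℂ)^3/(k^3*F^3) - ((γ₂:ℂ)^3 - 3*(lam:ℂ)*(γ₂:ℂ)))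
      * (k^3*E⁻¹^3 + (lam:ℂ)^3/(k^3*E⁻¹^3) - ((γ₁:ℂ)^3 - 3*(lam:ℂ)*(γ₁:ℂ))) := by
        rw [hC₁, hC₂, inv_pow]
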